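/- Let G and H be two group structures on the same set X such that the finitary group coarse structures F_G and F_H induce the same linkness relation on subsets of X. Then F_G = F_H. -/

import Mathlib

open Set

/-- A coarse structure (ballean) on a set `X`. -/
structure CoarseStruct (X : Type*) where
  sets : Set (Set (X × X))
  diagonal_mem : Set.diagonal X ∈ sets
  diagonal_subset : ∀ E ∈ sets, Set.diagonal X ⊆ E
  comp_mem : ∀ E ∈ sets, ∀ F ∈ sets,
    {p : X × X | ∃ z, (p.1, z) ∈ E ∧ (z, p.2) ∈ F} ∈ sets
  inv_mem : ∀ E ∈ sets, {p : X × X | (p.2, p.1) ∈ E} ∈ sets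
  subset_mem : ∀ E ∈ sets, ∀ E' : Set (X × X),
    Set.diagonal X ⊆ E' → E' ⊆ E → E' ∈ sets
  cover : ∀ p : X × X, ∃ E ∈ sets, p ∈ E

namespace CoarseStruct

variable {X : Type*}

/-- The ball `E[A]` of radius `E` around `A`. -/
def ball (E : Set (X × X)) (A : Set X) : Set X := {y | ∃ a ∈ A, (a, y) ∈ E}

/-- A set is bounded if it is contained in a ball around a point. -/
def IsBounded (C : CoarseStruct X) (B : Set X) : Prop :=
  ∃ E ∈ C.sets, ∃ x : X, B ⊆ ball E {x}

/-- Closeness: `A δ B`. -/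
def Close (C : CoarseStruct X) (A B : Set X) : Prop :=
  ∃ E ∈ C.sets, A ⊆ ball E B ∧ B ⊆ ball E A

/-- Linkness: `A λ B`. -/
def Linked (C : CoarseStruct X) (A B : Set X) : Prop :=
  (C.IsBounded A ∧ C.IsBounded B) ∨
  ∃ A' B' : Set X, A' ⊆ A ∧ B' ⊆ B ∧ ¬C.IsBounded A' ∧ ¬C.IsBounded B' ∧ C.Close A' B'

def LambdaEquiv (C C' : CoarseStruct X) : Prop :=
  ∀ A B : Set X, C.Linked A B ↔ C'.Linked A B

def DeltaEquiv (C C' : CoarseStruct X) : Prop :=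
  ∀ A B : Set X, C.Close A B ↔ C'.Close A B

def Discrete (C : CoarseStruct X) : Prop :=
  ∀ E ∈ C.sets, ∃ B : Set X, C.IsBounded B ∧ ∀ x ∉ B, ball E {x} = {x}

def Large (C : CoarseStruct X) (Y : Set X) : Prop :=
  ∃ E ∈ C.sets, ball E Y = Set.univ

/-- The subballean on `Y` is discrete. -/
def DiscreteOn (C : CoarseStruct X) (Y : Set X) : Prop :=
  ∀ E ∈ C.sets, ∃ B : Set X, C.IsBounded B ∧ ∀ y ∈ Y \ B, ball E {y} ∩ Y = {y}

def CoarselyDiscrete (C : CoarseStruct X) : Prop :=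
  ∃ Y : Set X, C.Large Y ∧ C.DiscreteOn Y

def LambdaRigid (C : CoarseStruct X) : Prop :=
  ∀ C' : CoarseStruct X, LambdaEquiv C C' → C' = C

def DeltaRigid (C : CoarseStruct X) : Prop :=
  ∀ C' : CoarseStruct X, DeltaEquiv C C' → C' = C

def IsBase (C : CoarseStruct X) (B : Set (Set (X × X))) : Prop :=
  B ⊆ C.sets ∧ ∀ E ∈ C.sets, ∃ E' ∈ B, E ⊆ E'

/-- Metrizable: the coarse structure has a countable base. -/
def Metrizable (C : CoarseStruct X) : Prop :=
  ∃ B : Set (Set (X × X)), B.Countable ∧ C.IsBase B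

/-- Ordinal: the coarse structure has a base linearly ordered by inclusion. -/
def Ordinal (C : CoarseStruct X) : Prop :=
  ∃ B : Set (Set (X × X)), C.IsBase B ∧ IsChain (· ⊆ ·) B

def MacroUniform (C : CoarseStruct X) (f : X → ℝ) : Prop :=
  ∀ E ∈ C.sets, ∃ r : ℝ, 0 < r ∧
    ∀ x : X, ∀ y ∈ ball E {x}, ∀ z ∈ ball E {x}, |f y - f z| ≤ r

def Submetrizable (C : CoarseStruct X) : Prop :=
  ¬C.IsBounded Set.univ ∧ ∃ C'' : CoarseStruct X,
    C.sets ⊆ C''.sets ∧ ¬C''.IsBounded Set.univ ∧ C''.Metrizable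

def SlowlyOscillating (C : CoarseStruct X) (f : X → ℝ) : Prop :=
  ∀ E ∈ C.sets, ∀ ε : ℝ, 0 < ε → ∃ B : Set X, C.IsBounded B ∧
    ∀ x ∉ B, ∀ y ∈ ball E {x}, ∀ z ∈ ball E {x}, |f y - f z| < ε

/-- The entourage `H_{(E,Φ)}`: `H[x] = {x}` for `x ∈ Φ` and `H[x] = E[x] \ Φ` for `x ∉ Φ`. -/
def EPhiBase (E : Set (X × X)) (Φ : Set X) : Set (X × X) :=
  {p | (p.1 ∈ Φ ∧ p.1 = p.2) ∨ (p.1 ∉ Φ ∧ p.2 ∉ Φ ∧ (p.1, p.2) ∈ E)}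

/-- The family of entourages of the coarse structure `E_φ` with base `{H_{(E,Φ)}}`. -/
def EPhiSets (C : CoarseStruct X) (φ : Filter X) : Set (Set (X × X)) :=
  {E' | Set.diagonal X ⊆ E' ∧ ∃ E ∈ C.sets, ∃ Φ ∈ φ, E' ⊆ EPhiBase E Φ}

/-- The set `B♯` of ultrafilters containing the complement of every bounded set. -/
def Bsharp (C : CoarseStruct X) : Set (Ultrafilter X) :=
  {p | ∀ B : Set X, C.IsBounded B → Bᶜ ∈ p}

/-- Parallelity of ultrafilters: `p ∥ q`. -/
def Parallel (C : CoarseStruct X) (p q : Ultrafilter X) : Prop :=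
  ∃ E ∈ C.sets, ∀ P ∈ p, ball E P ∈ q

def AsympDisjoint (C : CoarseStruct X) (A B : Set X) : Prop :=
  ∀ E ∈ C.sets, C.IsBounded (ball E A ∩ ball E B)

def AsympNbhd (C : CoarseStruct X) (A U : Set X) : Prop :=
  ∀ E ∈ C.sets, C.IsBounded (ball E A \ U)

def Normal (C : CoarseStruct X) : Prop :=
  ∀ A B : Set X, C.AsympDisjoint A B →
    ∃ U V : Set X, C.AsympNbhd A U ∧ C.AsympNbhd B V ∧ Disjoint U V

end CoarseStruct

/-- The finitary group coarse structure of a group structure `g` on `X`. -/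
def finGroupSets (X : Type*) (g : Group X) : Set (Set (X × X)) :=
  letI := g
  {E' | Set.diagonal X ⊆ E' ∧
    ∃ F : Finset X, ∀ p ∈ E', p.1 = p.2 ∨ ∃ f ∈ F, p.2 = f * p.1}


lemma countable_listSet {X : Type*} {T : Set X} (hT : T.Countable) :
    {l : List X | ∀ v ∈ l, v ∈ T}.Countable := by
  have := hT.to_subtype
  have hsub : {l : List X | ∀ v ∈ l, v ∈ T} ⊆ Set.range (List.map (Subtype.val : T → X)) := by
    intro l hl
    induction l with
    | nil => exact ⟨[], rfl⟩
    | cons a l ih =>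
      obtain ⟨l', hl'⟩ := ih (fun v hv => hl v (List.mem_cons_of_mem _ hv))
      exact ⟨⟨a, hl a List.mem_cons_self⟩ :: l', by simp [hl']⟩
  exact (Set.countable_range _).mono hsub

section OneGroup
variable {X : Type*} [Group X]

def grpCl (S : Set X) : Set X :=
  List.prod '' {l : List X | ∀ v ∈ l, v ∈ S ∨ v⁻¹ ∈ S}

lemma subset_grpCl (S : Set X) : S ⊆ grpCl S := fun x hx =>
  ⟨[x], fun v hv => by rw [List.mem_singleton] at hv; exact hv ▸ Or.inl hx, by simp⟩

lemma grpCl_mul {S : Set X} {x y : X} (hx : x ∈ grpCl S) (hy : y ∈ grpCl S) :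
    x * y ∈ grpCl S := by
  obtain ⟨l, hl, rfl⟩ := hx; obtain ⟨m, hm, rfl⟩ := hy
  exact ⟨l ++ m, fun v hv => (List.mem_append.1 hv).elim (hl v) (hm v), List.prod_append⟩

lemma grpCl_inv {S : Set X} {x : X} (hx : x ∈ grpCl S) : x⁻¹ ∈ grpCl S := by
  obtain ⟨l, hl, rfl⟩ := hx
  refine ⟨(l.map fun v => v⁻¹).reverse, ?_, (List.prod_inv_reverse l).symm⟩
  intro v hv
  simp only [List.mem_reverse, List.mem_map] at hv
  obtain ⟨w, hw, rfl⟩ := hv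
  rcases hl w hw with h' | h'
  · exact Or.inr (by simpa using h')
  · exact Or.inl h'

lemma grpCl_countable {S : Set X} (hS : S.Countable) : (grpCl S).Countable := by
  apply Set.Countable.image
  have : {l : List X | ∀ v ∈ l, v ∈ S ∨ v⁻¹ ∈ S}
      = {l : List X | ∀ v ∈ l, v ∈ (S ∪ (fun v : X => v⁻¹) ⁻¹' S)} := rfl
  rw [this]
  exact countable_listSet (hS.union (hS.preimage inv_injective))

end OneGroup
section LambdaRigidAux

variable {X : Type*}

/-- Multiplication of an explicit group structure. -/
def mul' (g : Group X) : X → X → X := letI := g; (· * ·)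
/-- Inversion of an explicit group structure. -/
def inv' (g : Group X) : X → X := letI := g; (·⁻¹)
/-- Identity of an explicit group structure. -/
def one' (g : Group X) : X := letI := g; 1

lemma mem_fgs (g : Group X) (E : Set (X × X)) : E ∈ finGroupSets X g ↔
    Set.diagonal X ⊆ E ∧ ∃ F : Finset X, ∀ p ∈ E, p.1 = p.2 ∨ ∃ f ∈ F, p.2 = mul' g f p.1 :=
  Iff.rfl

lemma A1 (g : Group X) (b c : X) : mul' g (mul' g b (inv' g c)) c = b := by
  letI := g; show b * c⁻¹ * c = b; exact inv_mul_cancel_right b c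

lemma A2 (g : Group X) (b c f : X) (hf : b = mul' g f c) : f = mul' g b (inv' g c) := by
  letI := g; subst hf; show f = f * c * c⁻¹; exact (mul_inv_cancel_right f c).symm

lemma A3 (g : Group X) (b : X) : mul' g b (inv' g b) = one' g := by
  letI := g; show b * b⁻¹ = 1; exact mul_inv_cancel b

lemma A5 (g : Group X) (a : X) : Function.Injective (mul' g a) := by
  letI := g; intro v w hvw; exact mul_left_cancel (show a * v = a * w from hvw)

lemma A6 (g : Group X) (v : X) : mul' g (one' g) v = v := by
  letI := g; show 1 * v = v; exact one_mul v

lemma A7 (g : Group X) (v : X) : inv' g (inv' g v) = v := by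
  letI := g; show v⁻¹⁻¹ = v; exact inv_inv v

lemma A8 (g : Group X) : inv' g (one' g) = one' g := by
  letI := g; show (1 : X)⁻¹ = 1; exact inv_one

lemma A9 (g : Group X) (b c k : X) (hb : b = mul' g k c) : c = mul' g (inv' g k) b := by
  letI := g; subst hb; show c = k⁻¹ * (k * c); exact (inv_mul_cancel_left k c).symm

lemma finBounded (g : Group X) (C : CoarseStruct X) (hC : C.sets = finGroupSets X g)
    (B : Set X) : C.IsBounded B ↔ B.Finite := by
  letI := g
  constructor
  · rintro ⟨E, hE, x, hsub⟩
    rw [hC] at hE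
    obtain ⟨-, F, hF⟩ := (mem_fgs g E).1 hE
    refine Set.Finite.subset ?_ hsub
    refine Set.Finite.subset (Set.Finite.insert x (F.finite_toSet.image fun f => mul' g f x)) ?_
    rintro v ⟨w, hw, hwv⟩
    rw [Set.mem_singleton_iff] at hw; subst hw
    rcases hF _ hwv with h1 | ⟨f, hf, h2⟩
    · exact Or.inl h1.symm
    · exact Or.inr ⟨f, hf, h2.symm⟩
  · intro hB
    refine ⟨Set.diagonal X ∪ ({(1 : X)} ×ˢ B), ?_, (1 : X), ?_⟩
    · rw [hC]
      refine (mem_fgs g _).2 ⟨Set.subset_union_left, hB.toFinset, ?_⟩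
      rintro p (hp | hp)
      · exact Or.inl hp
      · obtain ⟨hp1, hp2⟩ := hp
        refine Or.inr ⟨p.2, hB.mem_toFinset.2 hp2, ?_⟩
        rw [Set.mem_singleton_iff] at hp1
        show p.2 = mul' g p.2 p.1
        rw [hp1]; show p.2 = p.2 * 1; exact (mul_one p.2).symm
    · intro b hb
      exact ⟨1, Set.mem_singleton _, Or.inr ⟨Set.mem_singleton _, hb⟩⟩

end LambdaRigidAux
section SlopesFinite

variable {X : Type*}

lemma slopes_finite (g h : Group X) (C C' : CoarseStruct X)
    (hC : C.sets = finGroupSets X g) (hC' : C'.sets = finGroupSets X h)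
    (hl : CoarseStruct.LambdaEquiv C C') (a : X) :
    (Set.range fun v => mul' h (mul' g a v) (inv' h v)).Finite := by
  classical
  by_contra hT
  set slope : X → X := fun v => mul' h (mul' g a v) (inv' h v) with hslope
  have hTi : (Set.range slope).Infinite := hT
  have hT' : (Set.range slope \ {one' h}).Infinite := hTi.diff (Set.finite_singleton _)
  set e := hT'.natEmbedding with he
  have hx0 : ∀ n : ℕ, ∃ v : X, slope v = (e n : X) := fun n => (e n).2.1
  choose x hxs using hx0
  have hsne : ∀ n, slope (x n) ≠ one' h := by
    intro n hone
    exact (e n).2.2 (by rw [← hxs n, hone]; rfl)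
  have hsinj : Function.Injective (slope ∘ x) := by
    intro n m hnm
    apply e.injective
    apply Subtype.ext
    rw [← hxs n, ← hxs m]; exact hnm
  have hxinj : Function.Injective x := fun n m hnm =>
    hsinj (show slope (x n) = slope (x m) by rw [hnm])
  -- the countable common "subgroup"
  set S : Set X := Set.range x ∪ Set.range (fun n => mul' g a (x n)) with hS
  set Y : Set X := @grpCl X h S with hY
  have hYc : Y.Countable :=
    @grpCl_countable X h S ((Set.countable_range x).union (Set.countable_range _))
  have hYne : Y.Nonempty := ⟨x 0, @subset_grpCl X h S _ (Or.inl ⟨0, rfl⟩)⟩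
  obtain ⟨z, hz⟩ := hYc.exists_eq_range hYne
  -- the exhaustion K
  set K : ℕ → Set X := fun n => {one' h} ∪ {v | ∃ i ≤ n, v = z i ∨ v = inv' h (z i)} with hK
  have hKfin : ∀ n, (K n).Finite := by
    intro n
    refine (Set.finite_singleton _).union (Set.Finite.subset
      (((Set.finite_le_nat n).image z).union ((Set.finite_le_nat n).image (fun i => inv' h (z i)))) ?_)
    rintro v ⟨i, hi, hv | hv⟩
    · exact Or.inl ⟨i, hi, hv.symm⟩
    · exact Or.inr ⟨i, hi, hv.symm⟩
  have hKmono : ∀ {m n : ℕ}, m ≤ n → K m ⊆ K n := by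
    rintro m n hmn v (hv | ⟨i, hi, hv⟩)
    · exact Or.inl hv
    · exact Or.inr ⟨i, le_trans hi hmn, hv⟩
  have hK1 : ∀ n, one' h ∈ K n := fun n => Or.inl rfl
  have hKinv : ∀ {n : ℕ} {v : X}, v ∈ K n → inv' h v ∈ K n := by
    rintro n v (hv | ⟨i, hi, hv | hv⟩)
    · rw [Set.mem_singleton_iff] at hv; rw [hv, A8]; exact Or.inl rfl
    · exact Or.inr ⟨i, hi, Or.inr (by rw [hv])⟩
    · exact Or.inr ⟨i, hi, Or.inl (by rw [hv, A7])⟩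
  have hKexh : ∀ v ∈ Y, ∃ n, v ∈ K n := by
    intro v hv
    rw [hz] at hv
    obtain ⟨i, rfl⟩ := hv
    exact ⟨i, Or.inr ⟨i, le_refl i, Or.inl rfl⟩⟩
  -- the sparse sequence
  set Z : List X → Set X := fun l => {v | v ∈ l} ∪ (mul' g a) '' {v | v ∈ l} with hZ
  have hZfin : ∀ l, (Z l).Finite := fun l => l.finite_toSet.union (l.finite_toSet.image _)
  set W : ℕ → List X → Set X := fun n l => Set.image2 (mul' h) (K n) (Z l) with hW
  have hWfin : ∀ n l, (W n l).Finite := fun n l => Set.Finite.image2 _ (hKfin n) (hZfin l)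
  have hWmem : ∀ {n : ℕ} {l : List X} {k v : X}, k ∈ K n → v ∈ Z l → mul' h k v ∈ W n l :=
    fun hk hv => Set.mem_image2_of_mem hk hv
  have exists_good : ∀ (n : ℕ) (l : List X), ∃ j : ℕ,
      x j ∉ W n l ∧ mul' g a (x j) ∉ W n l := by
    intro n l
    have h1 : {j : ℕ | x j ∈ W n l}.Finite := (hWfin n l).preimage hxinj.injOn
    have h2 : {j : ℕ | mul' g a (x j) ∈ W n l}.Finite :=
      (hWfin n l).preimage ((A5 g a).comp hxinj).injOn
    obtain ⟨j, hj⟩ := (h1.union h2).infinite_compl.nonempty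
    exact ⟨j, fun hm => hj (Or.inl hm), fun hm => hj (Or.inr hm)⟩
  choose pick hp1 hp2 using exists_good
  set L : ℕ → List X := fun n => Nat.rec [] (fun m lm => lm ++ [x (pick m lm)]) n with hLdef
  set y : ℕ → X := fun n => x (pick n (L n)) with hy
  have hLsucc : ∀ n, L (n + 1) = L n ++ [y n] := fun n => rfl
  have hyW1 : ∀ n, y n ∉ W n (L n) := fun n => hp1 n (L n)
  have hyW2 : ∀ n, mul' g a (y n) ∉ W n (L n) := fun n => hp2 n (L n)
  have hmemL : ∀ n m, m < n → y m ∈ L n := by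
    intro n
    induction n with
    | zero => omega
    | succ n ih =>
      intro m hm
      rw [hLsucc n, List.mem_append]
      rcases Nat.lt_succ_iff_lt_or_eq.1 hm with hm' | hm'
      · exact Or.inl (ih m hm')
      · exact Or.inr (by rw [hm']; exact List.mem_singleton_self _)
  have hZ1 : ∀ {n m : ℕ}, m < n → y m ∈ Z (L n) := fun hmn => Or.inl (hmemL _ _ hmn)
  have hZ2 : ∀ {n m : ℕ}, m < n → mul' g a (y m) ∈ Z (L n) :=
    fun hmn => Or.inr ⟨_, hmemL _ _ hmn, rfl⟩
  -- F1 : y is injective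
  have hne : ∀ m n, m < n → y n ≠ y m := by
    intro m n hmn heq
    apply hyW1 n
    rw [heq, ← A6 h (y m)]
    exact hWmem (hK1 n) (hZ1 hmn)
  have F1 : Function.Injective y := by
    intro n m hnm
    rcases lt_trichotomy n m with hc | hc | hc
    · exact absurd hnm.symm (hne n m hc)
    · exact hc
    · exact absurd hnm (hne m n hc)
  -- F2 : disjointness of A and B
  have F2 : ∀ n m, mul' g a (y n) ≠ y m := by
    intro n m heq
    rcases lt_trichotomy n m with hc | hc | hc
    · apply hyW1 m
      rw [← heq, ← A6 h (mul' g a (y n))]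
      exact hWmem (hK1 m) (hZ2 hc)
    · subst hc
      apply hsne (pick n (L n))
      show slope (y n) = one' h
      rw [hslope]
      show mul' h (mul' g a (y n)) (inv' h (y n)) = one' h
      rw [heq]
      exact A3 h (y n)
    · apply hyW2 n
      rw [heq, ← A6 h (y m)]
      exact hWmem (hK1 n) (hZ1 hc)
  -- F3 : separation
  have F3 : ∀ (M : ℕ) (k : X) (n m : ℕ), k ∈ K M → n ≠ m →
      mul' g a (y n) = mul' h k (y m) → n ≤ M := by
    intro M k n m hk hnm heq
    by_contra hn
    push_neg at hn
    rcases lt_or_gt_of_ne hnm with hc | hc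
    · -- n < m : then m > M too
      have hm : M < m := lt_trans hn hc
      apply hyW1 m
      have : y m = mul' h (inv' h k) (mul' g a (y n)) := A9 h _ _ _ heq
      rw [this]
      exact hWmem (hKmono hm.le (hKinv hk)) (hZ2 hc)
    · -- m < n
      apply hyW2 n
      rw [heq]
      exact hWmem (hKmono hn.le hk) (hZ1 hc)
  -- F4 : slopes along y are injective
  have F4 : Function.Injective (fun n => slope (y n)) := by
    intro n m hnm
    exact F1 (congrArg x (hsinj hnm))
  -- membership of y-points in Y
  have hyY : ∀ n, y n ∈ Y := fun n => @subset_grpCl X h S _ (Or.inl ⟨pick n (L n), rfl⟩)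
  have hayY : ∀ n, mul' g a (y n) ∈ Y := fun n =>
    @subset_grpCl X h S _ (Or.inr ⟨pick n (L n), rfl⟩)
  -- the linked pair
  set A : Set X := Set.range y with hA
  set B : Set X := Set.range (fun n => mul' g a (y n)) with hB
  have hAinf : A.Infinite := Set.infinite_range_of_injective F1
  have hBinf : B.Infinite := Set.infinite_range_of_injective ((A5 g a).comp F1)
  -- A and B are close in C
  set E₀ : Set (X × X) := {p : X × X | p.1 = p.2 ∨ p.2 = mul' g a p.1 ∨ p.1 = mul' g a p.2}
    with hE₀
  have hE₀mem : E₀ ∈ C.sets := by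
    rw [hC]
    refine (mem_fgs g E₀).2 ⟨fun p hp => Or.inl hp, {a, inv' g a}, ?_⟩
    rintro p (hp | hp | hp)
    · exact Or.inl hp
    · exact Or.inr ⟨a, Finset.mem_insert_self _ _, hp⟩
    · exact Or.inr ⟨inv' g a, Finset.mem_insert.2 (Or.inr (Finset.mem_singleton_self _)),
        A9 g _ _ _ hp⟩
  have hclose : C.Close A B := by
    refine ⟨E₀, hE₀mem, ?_, ?_⟩
    · rintro u ⟨n, rfl⟩
      exact ⟨mul' g a (y n), ⟨n, rfl⟩, Or.inr (Or.inr rfl)⟩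
    · rintro u ⟨n, rfl⟩
      exact ⟨y n, ⟨n, rfl⟩, Or.inr (Or.inl rfl)⟩
  have hlinked : C.Linked A B := by
    refine Or.inr ⟨A, B, subset_rfl, subset_rfl, ?_, ?_, hclose⟩
    · rw [finBounded g C hC]; exact hAinf
    · rw [finBounded g C hC]; exact hBinf
  have hlinked' := (hl A B).1 hlinked
  rcases hlinked' with ⟨hbA, _⟩ | ⟨A', B', hA'sub, hB'sub, _, hB'unb, E', hE'mem, _, hbb2⟩
  · exact hAinf ((finBounded h C' hC' A).1 hbA)
  · rw [hC'] at hE'mem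
    obtain ⟨-, F₀, hF₀⟩ := (mem_fgs h E').1 hE'mem
    have hB'inf : B'.Infinite := fun hfin => hB'unb ((finBounded h C' hC' B').2 hfin)
    set F₁ : Finset X := F₀.filter (fun f => f ∈ Y) with hF₁
    have hMex : ∀ f : {f // f ∈ F₁}, ∃ n, (f : X) ∈ K n :=
      fun f => hKexh _ (Finset.mem_filter.1 f.2).2
    choose nf hnf using hMex
    set M : ℕ := F₁.attach.sup nf with hM
    have hMspec : ∀ f ∈ F₁, f ∈ K M := fun f hf =>
      hKmono (Finset.le_sup (Finset.mem_attach _ ⟨f, hf⟩)) (hnf ⟨f, hf⟩)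
    set Nbad : Set ℕ := {n | n ≤ M} ∪ (fun n => slope (y n)) ⁻¹' ↑F₁ with hNbad
    have hNbadfin : Nbad.Finite :=
      (Set.finite_le_nat M).union (F₁.finite_toSet.preimage F4.injOn)
    have hB'sub2 : B' ⊆ (fun n => mul' g a (y n)) '' Nbad := by
      intro b hb
      obtain ⟨n, rfl⟩ := hB'sub hb
      obtain ⟨a', ha'A', ha'E⟩ := hbb2 hb
      obtain ⟨m, rfl⟩ := hA'sub ha'A'
      rcases hF₀ _ ha'E with heq | ⟨f, hf, hfe⟩
      · exact absurd heq.symm (F2 n m)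
      · have hfeq : f = mul' h (mul' g a (y n)) (inv' h (y m)) := A2 h _ _ _ hfe
        have hfY : f ∈ Y := by
          rw [hfeq]
          exact @grpCl_mul X h S _ _ (hayY n) (@grpCl_inv X h S _ (hyY m))
        have hfF₁ : f ∈ F₁ := Finset.mem_filter.2 ⟨hf, hfY⟩
        by_cases hnm : n = m
        · subst hnm
          refine ⟨n, Or.inr ?_, rfl⟩
          show slope (y n) ∈ (F₁ : Set X)
          have : slope (y n) = f := by rw [hfeq, hslope]
          rw [this]
          exact hfF₁
        · exact ⟨n, Or.inl (F3 M f n m (hMspec f hfF₁) hnm hfe), rfl⟩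
    exact hB'inf (Set.Finite.subset (hNbadfin.image _) hB'sub2)

end SlopesFinite
lemma fgs_subset {X : Type*} (g h : Group X) (C C' : CoarseStruct X)
    (hC : C.sets = finGroupSets X g) (hC' : C'.sets = finGroupSets X h)
    (hl : CoarseStruct.LambdaEquiv C C') : C.sets ⊆ C'.sets := by
  intro E hE
  rw [hC] at hE
  rw [hC']
  obtain ⟨hd, F, hF⟩ := (mem_fgs g E).1 hE
  have hfin2 : (⋃ f ∈ F, Set.range fun v => mul' h (mul' g f v) (inv' h v)).Finite :=
    F.finite_toSet.biUnion fun f _ => slopes_finite g h C C' hC hC' hl f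
  refine (mem_fgs h E).2 ⟨hd, hfin2.toFinset, ?_⟩
  intro p hp
  rcases hF p hp with h1 | ⟨f, hf, h2⟩
  · exact Or.inl h1
  · refine Or.inr ⟨mul' h p.2 (inv' h p.1), ?_, (A1 h p.2 p.1).symm⟩
    rw [Set.Finite.mem_toFinset]
    exact Set.mem_biUnion hf ⟨p.1, by show mul' h (mul' g f p.1) (inv' h p.1) = _; rw [← h2]⟩
/-- If the finitary coarse structures of two group structures on `X` induce
the same linkness relation, then they coincide. -/
theorem finitary_group_lambdaRigid {X : Type*} (g h : Group X)
    (C C' : CoarseStruct X) (hC : C.sets = finGroupSets X g)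
    (hC' : C'.sets = finGroupSets X h)
    (hl : CoarseStruct.LambdaEquiv C C') : C.sets = C'.sets :=
  Set.Subset.antisymm (fgs_subset g h C C' hC hC' hl)
    (fgs_subset h g C' C hC' hC (fun A B => (hl A B).symm))
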